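/- In the linear setting with B ∈ ℝ^{K×N} and Λ, C positive definite, the rMAP sample û_MAP = L⁻¹(BᵀΛ⁻¹(d + θ) + C⁻¹(u₀ + ε)), with θ ∼ N(0, Λ), ε ∼ N(0, C) independent, has exactly the posterior distribution N(ū, C_post), where ū = u₀ + C Bᵀ(Λ + B C Bᵀ)⁻¹(d − B u₀) and C_post = C − C Bᵀ(Λ + B C Bᵀ)⁻¹ B C. -/

import Mathlib

set_option maxHeartbeats 1000000

open MeasureTheory ProbabilityTheory Matrix Real ENNReal NNReal


lemma exp_quad_eq (v₁ v₂ : ℝ) (h₁ : 0 < v₁) (h₂ : 0 < v₂) (m₁ m₂ z x : ℝ) :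
    -(x - m₁)^2 / (2*v₁) + -(z - x - m₂)^2 / (2*v₂)
      = -((v₁+v₂)/(2*v₁*v₂)) * (x - (v₂*m₁ + v₁*(z-m₂))/(v₁+v₂))^2
        + -(z - (m₁+m₂))^2 / (2*(v₁+v₂)) := by
  have h12 : v₁ + v₂ ≠ 0 := by positivity
  field_simp
  ring

lemma gaussianPDFReal_mul (m₁ m₂ : ℝ) (v₁ v₂ : NNReal) (h₁ : 0 < (v₁:ℝ)) (h₂ : 0 < (v₂:ℝ))
    (z x : ℝ) :
    gaussianPDFReal m₁ v₁ x * gaussianPDFReal m₂ v₂ (z - x)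
      = ((√(2*π*v₁))⁻¹ * (√(2*π*v₂))⁻¹ * rexp (-(z - (m₁+m₂))^2 / (2*((v₁:ℝ)+v₂))))
        * rexp (-(((v₁:ℝ)+v₂)/(2*v₁*v₂)) * (x - ((v₂:ℝ)*m₁ + v₁*(z-m₂))/((v₁:ℝ)+v₂))^2) := by
  simp only [gaussianPDFReal_def]
  rw [show ((√(2*π*(v₁:ℝ)))⁻¹ * rexp (-(x - m₁)^2 / (2*v₁))) * ((√(2*π*(v₂:ℝ)))⁻¹ * rexp (-(z - x - m₂)^2 / (2*v₂)))
    = (√(2*π*(v₁:ℝ)))⁻¹ * (√(2*π*(v₂:ℝ)))⁻¹ * (rexp (-(x - m₁)^2 / (2*v₁)) * rexp (-(z - x - m₂)^2 / (2*v₂))) by ring]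
  rw [← Real.exp_add, exp_quad_eq v₁ v₂ h₁ h₂ m₁ m₂ z x, Real.exp_add]
  ring

lemma gaussianPDFReal_conv (m₁ m₂ : ℝ) (v₁ v₂ : NNReal) (h₁ : 0 < (v₁:ℝ)) (h₂ : 0 < (v₂:ℝ)) (z : ℝ) :
    ∫ x : ℝ, gaussianPDFReal m₁ v₁ x * gaussianPDFReal m₂ v₂ (z - x)
      = gaussianPDFReal (m₁+m₂) (v₁+v₂) z := by
  have hApos : 0 < ((v₁:ℝ)+v₂)/(2*v₁*v₂) := by positivity
  simp_rw [gaussianPDFReal_mul m₁ m₂ v₁ v₂ h₁ h₂ z]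
  rw [MeasureTheory.integral_const_mul]
  have hshift : ∫ x : ℝ, rexp (-(((v₁:ℝ)+v₂)/(2*v₁*v₂)) * (x - ((v₂:ℝ)*m₁ + v₁*(z-m₂))/((v₁:ℝ)+v₂))^2)
      = ∫ x : ℝ, rexp (-(((v₁:ℝ)+v₂)/(2*v₁*v₂)) * x^2) :=
    MeasureTheory.integral_sub_right_eq_self (fun x => rexp (-(((v₁:ℝ)+v₂)/(2*v₁*v₂)) * x^2)) _
  rw [hshift, integral_gaussian]
  rw [gaussianPDFReal_def]
  have h12 : (0:ℝ) < (v₁:ℝ) + v₂ := by positivity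
  have hπ : (0:ℝ) < π := Real.pi_pos
  rw [show ((√(2*π*(v₁:ℝ)))⁻¹ * (√(2*π*(v₂:ℝ)))⁻¹ * rexp (-(z - (m₁+m₂))^2 / (2*((v₁:ℝ)+v₂)))) * √(π/(((v₁:ℝ)+v₂)/(2*v₁*v₂)))
    = ((√(2*π*(v₁:ℝ)))⁻¹ * (√(2*π*(v₂:ℝ)))⁻¹ * √(π/(((v₁:ℝ)+v₂)/(2*v₁*v₂)))) * rexp (-(z - (m₁+m₂))^2 / (2*((v₁:ℝ)+v₂))) by ring]
  have hc : (√(2*π*(v₁:ℝ)))⁻¹ * (√(2*π*(v₂:ℝ)))⁻¹ * √(π/(((v₁:ℝ)+v₂)/(2*v₁*v₂))) = (√(2*π*((v₁:ℝ)+v₂)))⁻¹ := by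
    rw [← Real.sqrt_inv, ← Real.sqrt_inv, ← Real.sqrt_mul (by positivity), ← Real.sqrt_mul (by positivity),
      ← Real.sqrt_inv]
    congr 1
    field_simp
  rw [hc]
  norm_num

lemma gaussianPDF_lintegral_conv (m₁ m₂ : ℝ) (v₁ v₂ : NNReal) (h₁ : 0 < (v₁:ℝ)) (h₂ : 0 < (v₂:ℝ)) (z : ℝ) :
    ∫⁻ x : ℝ, gaussianPDF m₁ v₁ x * gaussianPDF m₂ v₂ (z - x)
      = gaussianPDF (m₁+m₂) (v₁+v₂) z := by
  have hApos : 0 < ((v₁:ℝ)+v₂)/(2*v₁*v₂) := by positivity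
  have hint : Integrable (fun x : ℝ => gaussianPDFReal m₁ v₁ x * gaussianPDFReal m₂ v₂ (z - x)) := by
    have h := (((integrable_exp_neg_mul_sq hApos).comp_sub_right
        (((v₂:ℝ)*m₁ + v₁*(z-m₂))/((v₁:ℝ)+v₂))).const_mul
        ((√(2*π*v₁))⁻¹ * (√(2*π*v₂))⁻¹ * rexp (-(z - (m₁+m₂))^2 / (2*((v₁:ℝ)+v₂)))))
    exact h.congr (by filter_upwards with x using (gaussianPDFReal_mul m₁ m₂ v₁ v₂ h₁ h₂ z x).symm)
  simp only [gaussianPDF_def]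
  simp_rw [← ENNReal.ofReal_mul (gaussianPDFReal_nonneg _ _ _)]
  rw [← MeasureTheory.ofReal_integral_eq_lintegral_ofReal hint
    (by filter_upwards with x using mul_nonneg (gaussianPDFReal_nonneg _ _ _) (gaussianPDFReal_nonneg _ _ _))]
  rw [gaussianPDFReal_conv m₁ m₂ v₁ v₂ h₁ h₂ z]

lemma conv_withDensity {f g : ℝ → ℝ≥0∞} (hf : Measurable f) (hg : Measurable g) :
    (volume.withDensity f).conv (volume.withDensity g)
      = volume.withDensity (fun z => ∫⁻ x, f x * g (z - x)) := by
  ext s hs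
  have hind : Measurable (s.indicator (fun _ => (1:ℝ≥0∞))) := measurable_const.indicator hs
  have hF : Measurable (Function.uncurry fun x z =>
      s.indicator (fun _ => (1:ℝ≥0∞)) z * g (z - x)) :=
    (hind.comp measurable_snd).mul (hg.comp (measurable_snd.sub measurable_fst))
  have hmeasint : Measurable fun x => ∫⁻ z, s.indicator (fun _ => (1:ℝ≥0∞)) z * g (z - x) :=
    hF.lintegral_prod_right'
  rw [Measure.conv, Measure.map_apply measurable_add hs,
    Measure.prod_apply (measurable_add hs), withDensity_apply _ hs]
  have hx : ∀ x : ℝ, (volume.withDensity g) (Prod.mk x ⁻¹' ((fun p : ℝ × ℝ => p.1 + p.2) ⁻¹' s))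
      = ∫⁻ z, s.indicator (fun _ => (1:ℝ≥0∞)) z * g (z - x) := by
    intro x
    have hmeas : MeasurableSet {y : ℝ | x + y ∈ s} := measurable_const_add x hs
    have hpre : Prod.mk x ⁻¹' ((fun p : ℝ × ℝ => p.1 + p.2) ⁻¹' s) = {y : ℝ | x + y ∈ s} := rfl
    rw [hpre, withDensity_apply _ hmeas, ← lintegral_indicator hmeas,
      ← lintegral_add_left_eq_self (fun z => s.indicator (fun _ => (1:ℝ≥0∞)) z * g (z - x)) x]
    congr 1
    funext y
    by_cases hy : x + y ∈ s
    · simp [Set.indicator_of_mem hy, Set.indicator_of_mem (show y ∈ {y : ℝ | x + y ∈ s} from hy)]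
    · simp [Set.indicator_of_notMem hy,
        Set.indicator_of_notMem (show y ∉ {y : ℝ | x + y ∈ s} from hy)]
  simp_rw [hx]
  rw [lintegral_withDensity_eq_lintegral_mul _ hf hmeasint]
  simp only [Pi.mul_apply]
  have hswap : ∫⁻ x, f x * ∫⁻ z, s.indicator (fun _ => (1:ℝ≥0∞)) z * g (z - x)
      = ∫⁻ z, ∫⁻ x, f x * (s.indicator (fun _ => (1:ℝ≥0∞)) z * g (z - x)) := by
    have : ∀ x, f x * ∫⁻ z, s.indicator (fun _ => (1:ℝ≥0∞)) z * g (z - x)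
        = ∫⁻ z, f x * (s.indicator (fun _ => (1:ℝ≥0∞)) z * g (z - x)) := by
      intro x
      have hgx : Measurable fun z : ℝ => s.indicator (fun _ => (1:ℝ≥0∞)) z * g (z - x) :=
        hind.mul (hg.comp (measurable_id.sub measurable_const))
      rw [← lintegral_const_mul _ hgx]
    simp_rw [this]
    exact lintegral_lintegral_swap (((hf.comp measurable_fst).mul hF).aemeasurable)
  rw [hswap]
  have hz : ∀ z : ℝ, (∫⁻ x, f x * (s.indicator (fun _ => (1:ℝ≥0∞)) z * g (z - x)))
      = s.indicator (fun z => ∫⁻ x, f x * g (z - x)) z := by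
    intro z
    by_cases hzs : z ∈ s
    · simp only [Set.indicator_of_mem hzs, one_mul]
    · simp [Set.indicator_of_notMem hzs]
  simp_rw [hz]
  rw [lintegral_indicator hs]

lemma dirac_conv' (a : ℝ) (μ : Measure ℝ) [SFinite μ] :
    (Measure.dirac a).conv μ = μ.map (fun y => a + y) := by
  rw [Measure.conv, Measure.dirac_prod, Measure.map_map measurable_add measurable_prodMk_left]
  rfl

lemma conv_dirac' (a : ℝ) (μ : Measure ℝ) [SFinite μ] :
    μ.conv (Measure.dirac a) = μ.map (fun y => y + a) := by
  rw [Measure.conv, Measure.prod_dirac, Measure.map_map measurable_add measurable_prodMk_right]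
  rfl

lemma gaussianReal_conv (m₁ m₂ : ℝ) (v₁ v₂ : NNReal) :
    (gaussianReal m₁ v₁).conv (gaussianReal m₂ v₂) = gaussianReal (m₁ + m₂) (v₁ + v₂) := by
  by_cases h₁ : v₁ = 0
  · subst h₁
    rw [gaussianReal_zero_var, dirac_conv', gaussianReal_map_const_add, add_comm m₂ m₁, zero_add]
  by_cases h₂ : v₂ = 0
  · subst h₂
    rw [gaussianReal_zero_var, conv_dirac', gaussianReal_map_add_const, add_zero]
  have h₁' : 0 < (v₁:ℝ) := by positivity
  have h₂' : 0 < (v₂:ℝ) := by positivity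
  have h12 : v₁ + v₂ ≠ 0 := by simp [h₁]
  rw [gaussianReal_of_var_ne_zero _ h₁, gaussianReal_of_var_ne_zero _ h₂,
    gaussianReal_of_var_ne_zero _ h12,
    conv_withDensity (measurable_gaussianPDF _ _) (measurable_gaussianPDF _ _)]
  congr 1
  funext z
  exact gaussianPDF_lintegral_conv m₁ m₂ v₁ v₂ h₁' h₂' z

lemma indepFun_add_gaussian {Ω : Type} [MeasurableSpace Ω] (P : Measure Ω) [IsProbabilityMeasure P]
    {X Y : Ω → ℝ} (hX : Measurable X) (hY : Measurable Y) (h : ProbabilityTheory.IndepFun X Y P)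
    {m₁ m₂ : ℝ} {v₁ v₂ : NNReal} (hXg : P.map X = gaussianReal m₁ v₁)
    (hYg : P.map Y = gaussianReal m₂ v₂) :
    P.map (fun ω => X ω + Y ω) = gaussianReal (m₁ + m₂) (v₁ + v₂) := by
  have hpair : P.map (fun ω => (X ω, Y ω)) = (P.map X).prod (P.map Y) :=
    (ProbabilityTheory.indepFun_iff_map_prod_eq_prod_map_map hX.aemeasurable hY.aemeasurable).mp h
  have : P.map (fun ω => X ω + Y ω)
      = ((P.map X).prod (P.map Y)).map (fun p : ℝ × ℝ => p.1 + p.2) := by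
    rw [← hpair, Measure.map_map measurable_add (hX.prodMk hY)]
    rfl
  rw [this, hXg, hYg, ← Measure.conv, gaussianReal_conv]

variable {K N : ℕ}

section MatrixFacts
variable (B : Matrix (Fin K) (Fin N) ℝ)
    (Λ : Matrix (Fin K) (Fin K) ℝ) (C : Matrix (Fin N) (Fin N) ℝ)

lemma hMpd (hΛ : Λ.PosDef) (hC : C.PosDef) : (Λ + B * C * Bᵀ).PosDef :=
  hΛ.add_posSemidef (hC.posSemidef.mul_mul_conjTranspose_same B)

lemma hBtB (hΛ : Λ.PosDef) : (Bᵀ * Λ⁻¹ * B).PosSemidef := by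
  have h := hΛ.inv.posSemidef.mul_mul_conjTranspose_same Bᵀ
  rwa [show (Bᵀ)ᴴ = (Bᵀ)ᵀ from rfl, transpose_transpose] at h

lemma hLpd (hΛ : Λ.PosDef) (hC : C.PosDef) : (Bᵀ * Λ⁻¹ * B + C⁻¹).PosDef := by
  rw [add_comm]
  exact hC.inv.add_posSemidef (hBtB B Λ hΛ)

lemma woodbury (hΛ : Λ.PosDef) (hC : C.PosDef) :
    (Bᵀ * Λ⁻¹ * B + C⁻¹) * (C - C * Bᵀ * (Λ + B * C * Bᵀ)⁻¹ * B * C) = 1 := by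
  have hCd : IsUnit C.det := isUnit_iff_ne_zero.mpr hC.det_pos.ne'
  have hΛd : IsUnit Λ.det := isUnit_iff_ne_zero.mpr hΛ.det_pos.ne'
  have hMd : IsUnit (Λ + B * C * Bᵀ).det :=
    isUnit_iff_ne_zero.mpr (hMpd B Λ C hΛ hC).det_pos.ne'
  set M := Λ + B * C * Bᵀ with hM
  have key : B * (C * (Bᵀ * (M⁻¹ * (B * C)))) = B * C - Λ * (M⁻¹ * (B * C)) := by
    calc B * (C * (Bᵀ * (M⁻¹ * (B * C)))) = (B * C * Bᵀ) * (M⁻¹ * (B * C)) := by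
          simp only [Matrix.mul_assoc]
      _ = (M - Λ) * (M⁻¹ * (B * C)) := by rw [hM]; congr 1; abel
      _ = M * (M⁻¹ * (B * C)) - Λ * (M⁻¹ * (B * C)) := by rw [Matrix.sub_mul]
      _ = B * C - Λ * (M⁻¹ * (B * C)) := by rw [Matrix.mul_nonsing_inv_cancel_left _ _ hMd]
  simp only [Matrix.add_mul, Matrix.mul_sub, Matrix.sub_mul, Matrix.mul_assoc]
  rw [key]
  simp only [Matrix.mul_sub, Matrix.nonsing_inv_mul_cancel_left _ _ hΛd,
    Matrix.nonsing_inv_mul_cancel_left _ _ hCd, Matrix.nonsing_inv_mul _ hCd]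
  abel

lemma woodbury' (hΛ : Λ.PosDef) (hC : C.PosDef) :
    (Bᵀ * Λ⁻¹ * B + C⁻¹)⁻¹ = C - C * Bᵀ * (Λ + B * C * Bᵀ)⁻¹ * B * C :=
  inv_eq_right_inv (woodbury B Λ C hΛ hC)

lemma mean1 (hΛ : Λ.PosDef) (hC : C.PosDef) :
    (Bᵀ * Λ⁻¹ * B + C⁻¹)⁻¹ * Bᵀ * Λ⁻¹ = C * Bᵀ * (Λ + B * C * Bᵀ)⁻¹ := by
  have hΛd : IsUnit Λ.det := isUnit_iff_ne_zero.mpr hΛ.det_pos.ne'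
  have hMd : IsUnit (Λ + B * C * Bᵀ).det :=
    isUnit_iff_ne_zero.mpr (hMpd B Λ C hΛ hC).det_pos.ne'
  rw [woodbury' B Λ C hΛ hC]
  set M := Λ + B * C * Bᵀ with hM
  have key : Bᵀ * (M⁻¹ * (B * (C * (Bᵀ * Λ⁻¹)))) = Bᵀ * Λ⁻¹ - Bᵀ * M⁻¹ := by
    calc Bᵀ * (M⁻¹ * (B * (C * (Bᵀ * Λ⁻¹)))) = Bᵀ * ((M⁻¹ * (B * C * Bᵀ)) * Λ⁻¹) := by
          simp only [Matrix.mul_assoc]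
      _ = Bᵀ * ((M⁻¹ * (M - Λ)) * Λ⁻¹) := by rw [show B * C * Bᵀ = M - Λ by rw [hM]; abel]
      _ = Bᵀ * ((M⁻¹ * M - M⁻¹ * Λ) * Λ⁻¹) := by rw [Matrix.mul_sub]
      _ = Bᵀ * ((1 - M⁻¹ * Λ) * Λ⁻¹) := by rw [Matrix.nonsing_inv_mul _ hMd]
      _ = Bᵀ * (Λ⁻¹ - M⁻¹ * (Λ * Λ⁻¹)) := by rw [Matrix.sub_mul, Matrix.one_mul, Matrix.mul_assoc]
      _ = Bᵀ * Λ⁻¹ - Bᵀ * M⁻¹ := by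
          rw [Matrix.mul_nonsing_inv _ hΛd, Matrix.mul_one, Matrix.mul_sub]
  simp only [Matrix.sub_mul, Matrix.mul_assoc]
  rw [key]
  simp only [Matrix.mul_sub]
  abel

lemma mean2 (hΛ : Λ.PosDef) (hC : C.PosDef) :
    (Bᵀ * Λ⁻¹ * B + C⁻¹)⁻¹ * C⁻¹ = 1 - C * Bᵀ * (Λ + B * C * Bᵀ)⁻¹ * B := by
  have hCd : IsUnit C.det := isUnit_iff_ne_zero.mpr hC.det_pos.ne'
  rw [woodbury' B Λ C hΛ hC, Matrix.sub_mul, Matrix.mul_nonsing_inv _ hCd,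
    Matrix.mul_nonsing_inv_cancel_right _ _ hCd]
end MatrixFacts

lemma covariance (B : Matrix (Fin K) (Fin N) ℝ)
    (Λ : Matrix (Fin K) (Fin K) ℝ) (C : Matrix (Fin N) (Fin N) ℝ)
    (hΛ : Λ.PosDef) (hC : C.PosDef)
    (hLpd : (Bᵀ * Λ⁻¹ * B + C⁻¹).PosDef) :
    (Bᵀ * Λ⁻¹ * B + C⁻¹)⁻¹ * Bᵀ * Λ⁻¹ * Λ * ((Bᵀ * Λ⁻¹ * B + C⁻¹)⁻¹ * Bᵀ * Λ⁻¹)ᵀ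
      + (Bᵀ * Λ⁻¹ * B + C⁻¹)⁻¹ * C⁻¹ * C * ((Bᵀ * Λ⁻¹ * B + C⁻¹)⁻¹ * C⁻¹)ᵀ
      = C - C * Bᵀ * (Λ + B * C * Bᵀ)⁻¹ * B * C := by
  have hΛd : IsUnit Λ.det := isUnit_iff_ne_zero.mpr hΛ.det_pos.ne'
  have hCd : IsUnit C.det := isUnit_iff_ne_zero.mpr hC.det_pos.ne'
  have hLd : IsUnit (Bᵀ * Λ⁻¹ * B + C⁻¹).det := isUnit_iff_ne_zero.mpr hLpd.det_pos.ne'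
  set L := Bᵀ * Λ⁻¹ * B + C⁻¹ with hL
  have hΛT : Λᵀ = Λ := hΛ.1
  have hCT : Cᵀ = C := hC.1
  have hLT : Lᵀ = L := hLpd.1
  have hΛiT : Λ⁻¹ᵀ = Λ⁻¹ := by rw [transpose_nonsing_inv, hΛT]
  have hCiT : C⁻¹ᵀ = C⁻¹ := by rw [transpose_nonsing_inv, hCT]
  have hLiT : L⁻¹ᵀ = L⁻¹ := by rw [transpose_nonsing_inv, hLT]
  rw [transpose_mul, transpose_mul, transpose_mul, hΛiT, hCiT, hLiT, transpose_transpose]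
  rw [← woodbury' B Λ C hΛ hC, ← hL]
  calc L⁻¹ * Bᵀ * Λ⁻¹ * Λ * (Λ⁻¹ * (B * L⁻¹)) + L⁻¹ * C⁻¹ * C * (C⁻¹ * L⁻¹)
      = L⁻¹ * (Bᵀ * (Λ⁻¹ * (Λ * (Λ⁻¹ * (B * L⁻¹)))))
        + L⁻¹ * (C⁻¹ * (C * (C⁻¹ * L⁻¹))) := by simp only [Matrix.mul_assoc]
    _ = L⁻¹ * (Bᵀ * (Λ⁻¹ * (B * L⁻¹))) + L⁻¹ * (C⁻¹ * L⁻¹) := by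
        rw [Matrix.nonsing_inv_mul_cancel_left _ _ hΛd, Matrix.nonsing_inv_mul_cancel_left _ _ hCd]
    _ = L⁻¹ * (L * L⁻¹) := by
        rw [hL, Matrix.add_mul, Matrix.mul_add]
        simp only [Matrix.mul_assoc]
    _ = L⁻¹ := by rw [Matrix.mul_nonsing_inv _ hLd, Matrix.mul_one]

lemma dot_mulVec_eq {m n : ℕ} (a : Fin m → ℝ) (A : Matrix (Fin m) (Fin n) ℝ) (v : Fin n → ℝ) :
    a ⬝ᵥ A *ᵥ v = Aᵀ *ᵥ a ⬝ᵥ v := by rw [dotProduct_mulVec, mulVec_transpose]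

lemma measurable_dot {m : ℕ} {Ω : Type} [MeasurableSpace Ω] {f : Ω → Fin m → ℝ}
    (hf : Measurable f) (v : Fin m → ℝ) : Measurable fun ω => v ⬝ᵥ f ω := by
  unfold dotProduct
  exact Finset.measurable_sum _ fun i _ => measurable_const.mul ((measurable_pi_apply i).comp hf)

/-- A random vector `X` is Gaussian with mean `m` and covariance `S` iff every
one-dimensional linear projection has the corresponding real Gaussian law. -/
def IsGaussianVec {Ω : Type} [MeasurableSpace Ω] {ι : Type} [Fintype ι]
    (P : Measure Ω) (X : Ω → ι → ℝ) (m : ι → ℝ) (S : Matrix ι ι ℝ) : Prop :=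
  ∀ a : ι → ℝ, P.map (fun ω => a ⬝ᵥ X ω)
    = gaussianReal (a ⬝ᵥ m) ((a ⬝ᵥ S.mulVec a).toNNReal)

theorem rMAP_sample_has_posterior_distribution {K N : ℕ}
    (B : Matrix (Fin K) (Fin N) ℝ)
    (Λ : Matrix (Fin K) (Fin K) ℝ) (C : Matrix (Fin N) (Fin N) ℝ)
    (hΛ : Λ.PosDef) (hC : C.PosDef)
    (L : Matrix (Fin N) (Fin N) ℝ) (hL : L = Bᵀ * Λ⁻¹ * B + C⁻¹)
    (d : Fin K → ℝ) (u0 : Fin N → ℝ)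
    {Ω : Type} [MeasurableSpace Ω] (P : Measure Ω) [IsProbabilityMeasure P]
    (θ : Ω → (Fin K → ℝ)) (ε : Ω → (Fin N → ℝ))
    (hθm : Measurable θ) (hεm : Measurable ε)
    (hθ : IsGaussianVec P θ 0 Λ) (hε : IsGaussianVec P ε 0 C)
    (hindep : IndepFun θ ε P) :
    IsGaussianVec P
      (fun ω => L⁻¹.mulVec ((Bᵀ * Λ⁻¹).mulVec (d + θ ω) + C⁻¹.mulVec (u0 + ε ω)))
      (u0 + (C * Bᵀ * (Λ + B * C * Bᵀ)⁻¹).mulVec (d - B.mulVec u0))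
      (C - C * Bᵀ * (Λ + B * C * Bᵀ)⁻¹ * B * C) := by
  intro a
  subst hL
  set L := Bᵀ * Λ⁻¹ * B + C⁻¹ with hL
  set G := C * Bᵀ * (Λ + B * C * Bᵀ)⁻¹ with hG
  set M₁ := L⁻¹ * Bᵀ * Λ⁻¹ with hM₁
  set M₂ := L⁻¹ * C⁻¹ with hM₂
  set bθ := M₁ᵀ *ᵥ a with hbθ
  set bε := M₂ᵀ *ᵥ a with hbε
  set k := M₁ *ᵥ d + M₂ *ᵥ u0 with hk
  -- Step 1: pointwise decomposition
  have hXeq : (fun ω => a ⬝ᵥ L⁻¹ *ᵥ ((Bᵀ * Λ⁻¹) *ᵥ (d + θ ω) + C⁻¹ *ᵥ (u0 + ε ω)))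
      = fun ω => a ⬝ᵥ k + (bθ ⬝ᵥ θ ω + bε ⬝ᵥ ε ω) := by
    funext ω
    have hvec : L⁻¹ *ᵥ ((Bᵀ * Λ⁻¹) *ᵥ (d + θ ω) + C⁻¹ *ᵥ (u0 + ε ω))
        = k + (M₁ *ᵥ θ ω + M₂ *ᵥ ε ω) := by
      simp only [hk, hM₁, hM₂, Matrix.mulVec_add, Matrix.mulVec_mulVec, Matrix.mul_assoc]
      abel
    simp only [hvec, dotProduct_add, dot_mulVec_eq, hbθ, hbε, hk]
  rw [hXeq]
  -- Step 2: measurability & laws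
  have mθ : Measurable fun ω => bθ ⬝ᵥ θ ω := measurable_dot hθm bθ
  have mε : Measurable fun ω => bε ⬝ᵥ ε ω := measurable_dot hεm bε
  have hθmap : P.map (fun ω => bθ ⬝ᵥ θ ω) = gaussianReal 0 ((bθ ⬝ᵥ Λ *ᵥ bθ).toNNReal) := by
    have h := hθ bθ
    simpa using h
  have hεmap : P.map (fun ω => bε ⬝ᵥ ε ω) = gaussianReal 0 ((bε ⬝ᵥ C *ᵥ bε).toNNReal) := by
    have h := hε bε
    simpa using h
  have hindep' : IndepFun (fun ω => bθ ⬝ᵥ θ ω) (fun ω => bε ⬝ᵥ ε ω) P :=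
    hindep.comp (measurable_dot measurable_id bθ) (measurable_dot measurable_id bε)
  have hsum : P.map (fun ω => bθ ⬝ᵥ θ ω + bε ⬝ᵥ ε ω)
      = gaussianReal (0 + 0) ((bθ ⬝ᵥ Λ *ᵥ bθ).toNNReal + (bε ⬝ᵥ C *ᵥ bε).toNNReal) :=
    indepFun_add_gaussian P mθ mε hindep' hθmap hεmap
  have hmap2 : P.map (fun ω => a ⬝ᵥ k + (bθ ⬝ᵥ θ ω + bε ⬝ᵥ ε ω))
      = (P.map (fun ω => bθ ⬝ᵥ θ ω + bε ⬝ᵥ ε ω)).map (fun x => a ⬝ᵥ k + x) := by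
    rw [Measure.map_map (measurable_const_add _) (show Measurable (fun ω => bθ ⬝ᵥ θ ω + bε ⬝ᵥ ε ω) from mθ.add mε)]
    rfl
  rw [hmap2, hsum, gaussianReal_map_const_add]
  -- Step 3: identify mean and variance
  have hLpd' : L.PosDef := hLpd B Λ C hΛ hC
  have hmean : k = u0 + G *ᵥ (d - B *ᵥ u0) := by
    have h1 : M₁ = G := by rw [hM₁, hG, mean1 B Λ C hΛ hC]
    have h2 : M₂ = 1 - G * B := by rw [hM₂, hG, mean2 B Λ C hΛ hC, Matrix.mul_assoc]
    rw [hk, h1, h2, Matrix.sub_mulVec, Matrix.one_mulVec, Matrix.mulVec_sub]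
    simp only [Matrix.mulVec_mulVec]
    abel
  have hvθ : (0:ℝ) ≤ bθ ⬝ᵥ Λ *ᵥ bθ := by simpa using hΛ.posSemidef.dotProduct_mulVec_nonneg bθ
  have hvε : (0:ℝ) ≤ bε ⬝ᵥ C *ᵥ bε := by simpa using hC.posSemidef.dotProduct_mulVec_nonneg bε
  have hvar : bθ ⬝ᵥ Λ *ᵥ bθ + bε ⬝ᵥ C *ᵥ bε
      = a ⬝ᵥ (C - C * Bᵀ * (Λ + B * C * Bᵀ)⁻¹ * B * C) *ᵥ a := by
    rw [← covariance B Λ C hΛ hC hLpd']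
    rw [Matrix.add_mulVec, dotProduct_add]
    rw [show (M₁ * Λ * M₁ᵀ) *ᵥ a = M₁ *ᵥ (Λ *ᵥ (M₁ᵀ *ᵥ a)) by
        simp [Matrix.mulVec_mulVec, Matrix.mul_assoc],
      show (M₂ * C * M₂ᵀ) *ᵥ a = M₂ *ᵥ (C *ᵥ (M₂ᵀ *ᵥ a)) by
        simp [Matrix.mulVec_mulVec, Matrix.mul_assoc],
      dot_mulVec_eq a M₁, dot_mulVec_eq a M₂]
  rw [zero_add, zero_add, hmean]
  congr 1
  rw [← Real.toNNReal_add hvθ hvε, hvar]
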